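/- With the substitution s = r·e^{−a√(log k)·t}, one computes ∫_{B_r \ B_{r/k}} e^{4π ω̃_k²} dx ≥ π r² (1 − e^{−2 log k}) = π r² (1 − k^{−2}), where ω̃_k = ω_k/‖ω_k‖ with ‖ω_k‖ = a ≥ 1. -/

import Mathlib

open MeasureTheory Real

/-- The Moser function on `ℝ²` with parameters `r > 0` and `k`. -/
noncomputable def moser (r : ℝ) (k : ℕ) (x : EuclideanSpace ℝ (Fin 2)) : ℝ :=
  if ‖x‖ ≤ r / k then (Real.log k).sqrt / Real.sqrt (2 * π)
  else if ‖x‖ ≤ r then Real.log (r / ‖x‖) / (Real.sqrt (2 * π) * (Real.log k).sqrt)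
  else 0

lemma moser_measurable (r : ℝ) (k : ℕ) : Measurable (moser r k) := by
  unfold moser
  apply Measurable.ite (measurableSet_le measurable_norm measurable_const) measurable_const
  apply Measurable.ite (measurableSet_le measurable_norm measurable_const) _ measurable_const
  exact ((Real.measurable_log.comp (measurable_const.div measurable_norm)).div_const _)

lemma moser_nonneg (r : ℝ) (hr : 0 < r) (k : ℕ) (x : EuclideanSpace ℝ (Fin 2)) :
    0 ≤ moser r k x := by
  unfold moser
  split_ifs with h1 h2
  · positivity
  · apply div_nonneg _ (by positivity)
    apply Real.log_nonneg
    rw [le_div_iff₀ (lt_of_le_of_lt (by positivity) (not_le.mp h1) : 0 < ‖x‖)]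
    simpa using h2
  · exact le_refl 0

lemma moser_le (r : ℝ) (hr : 0 < r) (k : ℕ) (hk : 2 ≤ k) (x : EuclideanSpace ℝ (Fin 2)) :
    moser r k x ≤ (Real.log k).sqrt / Real.sqrt (2 * π) := by
  have hk1 : (1:ℝ) < k := by exact_mod_cast lt_of_lt_of_le one_lt_two (by exact_mod_cast hk)
  have hlogk : 0 < Real.log k := Real.log_pos hk1
  unfold moser
  split_ifs with h1 h2
  · exact le_refl _
  · have hx : 0 < ‖x‖ := lt_of_le_of_lt (by positivity) (not_le.mp h1)
    have hlog : Real.log (r / ‖x‖) ≤ Real.log k := by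
      apply Real.log_le_log (by positivity)
      rw [div_le_iff₀ hx]
      have : r / k < ‖x‖ := not_le.mp h1
      have hk0 : (0:ℝ) < k := by exact_mod_cast lt_of_lt_of_le two_pos hk
      have : r / k < ‖x‖ := not_le.mp h1
      calc r = k * (r / k) := by field_simp
        _ ≤ k * ‖x‖ := by nlinarith
    rw [div_le_div_iff₀ (by positivity) (by positivity)]
    calc Real.log (r / ‖x‖) * Real.sqrt (2 * π)
        ≤ Real.log k * Real.sqrt (2 * π) := by
          exact mul_le_mul_of_nonneg_right hlog (Real.sqrt_nonneg _)
      _ = (Real.log k).sqrt * (Real.sqrt (2 * π) * (Real.log k).sqrt) := by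
          rw [← mul_assoc, mul_comm ((Real.log k).sqrt), mul_assoc,
            Real.mul_self_sqrt hlogk.le, mul_comm]
  · positivity

/-- On the annulus `B_r \ B_{r/k}` one has
`∫ e^{4π ω̃_k²} dx ≥ π r² (1 − e^{−2 log k})`, where `ω̃_k = ω_k/a` with `a ≥ 1`. -/
theorem stmt_11 (r : ℝ) (hr : 0 < r) (k : ℕ) (hk : 2 ≤ k) (a : ℝ) (ha : 1 ≤ a) :
    π * r ^ 2 * (1 - Real.exp (-2 * Real.log k))
      ≤ ∫ x in {x : EuclideanSpace ℝ (Fin 2) | r / k ≤ ‖x‖ ∧ ‖x‖ ≤ r},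
          Real.exp (4 * π * (moser r k x / a) ^ 2) ∂volume := by
  have hk0 : (0:ℝ) < k := by exact_mod_cast lt_of_lt_of_le two_pos hk
  have hk1 : (1:ℝ) < k := by exact_mod_cast lt_of_lt_of_le one_lt_two (by exact_mod_cast hk)
  have ha0 : 0 < a := lt_of_lt_of_le one_pos ha
  set S := {x : EuclideanSpace ℝ (Fin 2) | r / k ≤ ‖x‖ ∧ ‖x‖ ≤ r} with hSdef
  have hS : S = Metric.closedBall 0 r \ Metric.ball 0 (r / k) := by
    ext x
    simp only [hSdef, Set.mem_setOf_eq, Set.mem_diff, Metric.mem_closedBall, Metric.mem_ball,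
      dist_zero_right, not_lt]
    tauto
  have hrk : r / k ≤ r := by
    rw [div_le_iff₀ hk0]; nlinarith
  have vball : volume (Metric.ball (0 : EuclideanSpace ℝ (Fin 2)) (r / k))
      = ENNReal.ofReal (π * (r / k) ^ 2) := by
    rw [EuclideanSpace.volume_ball]
    simp only [Fintype.card_fin]
    rw [show ((2:ℕ):ℝ) / 2 + 1 = 2 by norm_num, Real.Gamma_two,
      Real.sq_sqrt Real.pi_pos.le, ← ENNReal.ofReal_pow (by positivity), ← ENNReal.ofReal_mul
      (by positivity)]
    ring_nf
  have vcball : volume (Metric.closedBall (0 : EuclideanSpace ℝ (Fin 2)) r)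
      = ENNReal.ofReal (π * r ^ 2) := by
    rw [EuclideanSpace.volume_closedBall]
    simp only [Fintype.card_fin]
    rw [show ((2:ℕ):ℝ) / 2 + 1 = 2 by norm_num, Real.Gamma_two,
      Real.sq_sqrt Real.pi_pos.le, ← ENNReal.ofReal_pow hr.le, ← ENNReal.ofReal_mul
      (by positivity)]
    ring_nf
  have hmeasS : MeasurableSet S := by
    rw [hS]; exact measurableSet_closedBall.diff measurableSet_ball
  have hvolS : volume S = ENNReal.ofReal (π * r ^ 2 - π * (r / k) ^ 2) := by
    rw [hS, measure_diff (Metric.ball_subset_closedBall.trans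
        (Metric.closedBall_subset_closedBall hrk))
      measurableSet_ball.nullMeasurableSet (by rw [vball]; exact ENNReal.ofReal_ne_top),
      vball, vcball, ← ENNReal.ofReal_sub _ (by positivity)]
  have hvolS_fin : volume S ≠ ⊤ := by rw [hvolS]; exact ENNReal.ofReal_ne_top
  have hexp : Real.exp (-2 * Real.log k) = ((k : ℝ) ^ 2)⁻¹ := by
    rw [show (-2 : ℝ) * Real.log k = -Real.log ((k:ℝ) ^ 2) by
        rw [Real.log_pow]; push_cast; ring,
      Real.exp_neg, Real.exp_log (by positivity)]
  have key : π * r ^ 2 * (1 - Real.exp (-2 * Real.log k)) = 1 * (volume S).toReal := by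
    rw [hvolS, ENNReal.toReal_ofReal (by nlinarith [Real.pi_pos, pow_le_pow_left₀ (by positivity : (0:ℝ) ≤ r / k) hrk 2] : (0:ℝ) ≤ π * r ^ 2 - π * (r / k) ^ 2), hexp]
    field_simp
  rw [key]
  apply setIntegral_ge_of_const_le_real hmeasS hvolS_fin
  · intro x _
    exact Real.one_le_exp (by positivity)
  · apply Measure.integrableOn_of_bounded hvolS_fin
    · apply Measurable.aestronglyMeasurable
      exact Real.measurable_exp.comp
        ((((moser_measurable r k).div_const a).pow_const 2).const_mul (4 * π))
    · filter_upwards with x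
      rw [Real.norm_eq_abs, Real.abs_exp]
      apply Real.exp_le_exp.mpr
      have hm0 := moser_nonneg r hr k x
      have hm1 := moser_le r hr k hk x
      have hlogk : 0 < Real.log k := Real.log_pos hk1
      have h1 : (moser r k x / a) ^ 2 ≤ (moser r k x) ^ 2 := by
        rw [div_pow]
        apply div_le_self (by positivity)
        nlinarith
      have h2 : (moser r k x) ^ 2 ≤ Real.log k / (2 * π) := by
        have := pow_le_pow_left₀ hm0 hm1 2
        rwa [div_pow, Real.sq_sqrt hlogk.le, Real.sq_sqrt (by positivity)] at this
      calc 4 * π * (moser r k x / a) ^ 2 ≤ 4 * π * (Real.log k / (2 * π)) := by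
            apply mul_le_mul_of_nonneg_left (h1.trans h2) (by positivity)
        _ = 2 * Real.log k := by field_simp; ring
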